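/- Let R be a positively SG left Noetherian ring and J a compatible SG ideal of R. Fix n, t ∈ ℕ and set I = (R_{≥t})^n, and let j : I/JI → R/J be the R/J-linear map induced by the inclusion I ⊆ R (sending x + JI to x + J). Then the cokernel of j is a torsion left R/J-module; and if moreover J satisfies condition (*), then the kernel of j is a torsion left R/J-module (torsion of R/J-modules being defined via the ideals (R/J)_{≥t}). -/

import Mathlib

open Pointwise

namespace SG

/-- A semi-graded ring: an internal direct sum decomposition `R = ⊕ₙ Rₙ` into additive
subgroups with `Rₘ·Rₙ ⊆ ⊕_{k ≤ m+n} R_k` and `1 ∈ R₀`. -/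
def IsSGRing {R : Type*} [Ring R] (g : ℤ → AddSubgroup R) : Prop :=
  DirectSum.IsInternal g ∧
    (∀ m n : ℤ, ∀ a ∈ g m, ∀ b ∈ g n, a * b ∈ ⨆ k ≤ m + n, g k) ∧
    (1 : R) ∈ g 0

/-- A semi-graded module over a semi-graded ring. -/
def IsSGModule {R M : Type*} [Ring R] [AddCommGroup M] [Module R M]
    (gR : ℤ → AddSubgroup R) (gM : ℤ → AddSubgroup M) : Prop :=
  DirectSum.IsInternal gM ∧
    ∀ m n : ℤ, 0 ≤ m → ∀ r ∈ gR m, ∀ x ∈ gM n, r • x ∈ ⨆ k ≤ m + n, gM k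

/-- A submodule `P` is a semi-graded submodule when `P = ⊕ₙ (Mₙ ⊓ P)`. -/
def IsSGSubmodule {R M : Type*} [Ring R] [AddCommGroup M] [Module R M]
    (gM : ℤ → AddSubgroup M) (P : Submodule R M) : Prop :=
  P.toAddSubgroup = ⨆ n : ℤ, (gM n ⊓ P.toAddSubgroup)

/-- `⟨X⟩^SG`: the intersection of all semi-graded submodules containing `X`. -/
def sgSpan {R M : Type*} [Ring R] [AddCommGroup M] [Module R M]
    (gM : ℤ → AddSubgroup M) (X : Set M) : Submodule R M :=
  sInf {P : Submodule R M | IsSGSubmodule gM P ∧ X ⊆ P}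

/-- A (left) ideal is two-sided. -/
def IsTwoSided {R : Type*} [Ring R] (I : Ideal R) : Prop :=
  ∀ x ∈ I, ∀ r : R, x * r ∈ I

/-- `R_{≥t}`: the intersection of all two-sided semi-graded ideals containing `⊕_{k ≥ t} R_k`. -/
def geIdeal {R : Type*} [Ring R] (gR : ℤ → AddSubgroup R) (t : ℕ) : Ideal R :=
  sInf {I : Ideal R | IsSGSubmodule gR I ∧ IsTwoSided I ∧
    ∀ k : ℤ, (t : ℤ) ≤ k → gR k ≤ I.toAddSubgroup}

/-- Powers of a (two-sided) ideal, `I⁰ = R`, `I^{n+1} = I·Iⁿ`. -/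
def idealPow {R : Type*} [Ring R] (I : Ideal R) : ℕ → Ideal R
  | 0 => ⊤
  | n + 1 => Submodule.span R ((I : Set R) * (idealPow I n : Set R))

/-- `x` is a torsion element: `(R_{≥t})ⁿ • x = 0` for some `n, t ∈ ℕ`. -/
def IsTorsionElem {R : Type*} [Ring R] (gR : ℤ → AddSubgroup R)
    {M : Type*} [AddCommGroup M] [Module R M] (x : M) : Prop :=
  ∃ t n : ℕ, ∀ y ∈ idealPow (geIdeal gR t) n, y • x = 0

/-- `R'_n`. -/
def RprimeN {R : Type*} [Ring R] (gR : ℤ → AddSubgroup R) (n : ℤ) : Set R :=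
  {r : R | r ∈ gR n ∧ ∀ m : ℤ, ∀ h ∈ gR m, r * h ∈ gR (n + m)}

/-- `R' = ⋃ₙ R'_n`. -/
def Rprime {R : Type*} [Ring R] (gR : ℤ → AddSubgroup R) : Set R :=
  ⋃ n : ℤ, RprimeN gR n

/-- `R''_n`. -/
def RdprimeN {R : Type*} [Ring R] (gR : ℤ → AddSubgroup R) (n : ℤ) : Set R :=
  {r : R | r ∈ RprimeN gR n ∧ ∀ m : ℤ, ∀ h ∈ gR m, h * r ∈ gR (n + m)}

/-- `R'' = ⋃ₙ R''_n`. -/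
def Rdprime {R : Type*} [Ring R] (gR : ℤ → AddSubgroup R) : Set R :=
  ⋃ n : ℤ, RdprimeN gR n

/-- A multiplicatively closed set satisfying the left Ore condition. -/
def IsLeftOreSet {R : Type*} [Ring R] (T : Set R) : Prop :=
  (1 : R) ∈ T ∧ (∀ a ∈ T, ∀ b ∈ T, a * b ∈ T) ∧
    ∀ r : R, ∀ s ∈ T, ∃ r' : R, ∃ s' ∈ T, s' * r = r' * s

/-- A good left Ore set. -/
def IsGoodOre {R : Type*} [Ring R] (gR : ℤ → AddSubgroup R) (T : Set R) : Prop :=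
  IsLeftOreSet T ∧ T ⊆ Rdprime gR ∧
    ∀ s ∈ T, ∀ r ∈ Rprime gR, ∃ u ∈ Rprime gR, ∃ v ∈ T, u * s = v * r

/-- A (left) schematic semi-graded ring: positively semi-graded, left Noetherian, with a
finite family of non-trivial good left Ore sets satisfying the schematic condition. -/
def IsSchematic {R : Type*} [Ring R] (gR : ℤ → AddSubgroup R) : Prop :=
  IsSGRing gR ∧ (∀ n : ℤ, n < 0 → gR n = ⊥) ∧ IsNoetherian R R ∧
    ∃ 𝒮 : Set (Set R), 𝒮.Finite ∧
      (∀ T ∈ 𝒮, IsGoodOre gR T ∧ ∃ x ∈ T, x ∈ ⨆ k ≥ (1 : ℤ), gR k) ∧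
      ∀ xf : Set R → R, (∀ T ∈ 𝒮, xf T ∈ T) →
        ∃ t m : ℕ, (idealPow (geIdeal gR t) m : Set R) ⊆
          ↑(⨆ T ∈ 𝒮, Ideal.span {xf T})

/-- `f^!(M)`: the largest semi-graded submodule of `M` annihilated by `J`, realized as the
sum of all semi-graded submodules annihilated by `J`. -/
def fShriek {R M : Type*} [Ring R] [AddCommGroup M] [Module R M]
    (gM : ℤ → AddSubgroup M) (J : Ideal R) : Submodule R M :=
  sSup {P : Submodule R M | IsSGSubmodule gM P ∧ ∀ j ∈ J, ∀ x ∈ P, j • x = 0}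

/-- The induced semigraduation on a quotient module. -/
def quotGrade {R M : Type*} [Ring R] [AddCommGroup M] [Module R M]
    (gM : ℤ → AddSubgroup M) (K : Submodule R M) : ℤ → AddSubgroup (M ⧸ K) :=
  fun n => (gM n).map (K.mkQ : M →ₗ[R] M ⧸ K).toAddMonoidHom

/-- Condition (*) on an ideal `J`. -/
def CondStar {R : Type*} [Ring R] (gR : ℤ → AddSubgroup R) (J : Ideal R) : Prop :=
  ∀ n t : ℕ, ∀ x ∈ J ⊓ idealPow (geIdeal gR t) n,
    ∃ nx tx : ℕ, ∀ y ∈ idealPow (geIdeal gR tx) nx,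
      y * x ∈ Submodule.span R ((J : Set R) * (idealPow (geIdeal gR t) n : Set R))

/-- Localizable semi-graded module: `R'_n · M_m ⊆ M_{n+m}`. -/
def IsLSG {R M : Type*} [Ring R] [AddCommGroup M] [Module R M]
    (gR : ℤ → AddSubgroup R) (gM : ℤ → AddSubgroup M) : Prop :=
  IsSGModule gR gM ∧
    ∀ n m : ℤ, ∀ r ∈ RprimeN gR n, ∀ x ∈ gM m, r • x ∈ gM (n + m)

universe v

/-- `E` is T-injective (in the category of all modules): maps into `E` from a submodule with
torsion quotient extend. -/
def TInjective {R : Type*} [Ring R] (gR : ℤ → AddSubgroup R)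
    (E : Type*) [AddCommGroup E] [Module R E] : Prop :=
  ∀ (M : Type v) [AddCommGroup M] [Module R M] (P : Submodule R M),
    (∀ x : M ⧸ P, IsTorsionElem gR x) →
      ∀ f : P →ₗ[R] E, ∃ g : M →ₗ[R] E, ∀ x : P, g (x : M) = f x

/-- `E` is T-injective within the category of LSG modules and homogeneous maps. -/
def TInjectiveLSG {R : Type*} [Ring R] (gR : ℤ → AddSubgroup R)
    {E : Type*} [AddCommGroup E] [Module R E] (gE : ℤ → AddSubgroup E) : Prop :=
  ∀ (M : Type v) [AddCommGroup M] [Module R M] (gM : ℤ → AddSubgroup M),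
    IsLSG gR gM →
    ∀ P : Submodule R M, IsSGSubmodule gM P →
      (∀ x : M ⧸ P, IsTorsionElem gR x) →
      ∀ f : P →ₗ[R] E, (∀ n : ℤ, ∀ x : P, (x : M) ∈ gM n → f x ∈ gE n) →
        ∃ g : M →ₗ[R] E, (∀ x : P, g (x : M) = f x) ∧
          ∀ n : ℤ, ∀ x ∈ gM n, g x ∈ gE n

end SG

set_option maxHeartbeats 1000000
set_option synthInstance.maxHeartbeats 1000000

section Aux

open SG DirectSum

variable {R S : Type*} [Ring R] [Ring S]

/-- The additive equivalence `⨁ i, Rᵢ ≃+ R` coming from an internal direct sum. -/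
noncomputable def sgEquiv (gR : ℤ → AddSubgroup R) (h : DirectSum.IsInternal gR) :
    (⨁ i : ℤ, gR i) ≃+ R :=
  AddEquiv.ofBijective (DirectSum.coeAddMonoidHom gR) h

/-- Projection onto the `i`-th semigraded component. -/
noncomputable def sgProj (gR : ℤ → AddSubgroup R) (h : DirectSum.IsInternal gR) (i : ℤ) :
    R →+ R :=
  AddMonoidHom.mk'
    (fun x => (((sgEquiv gR h).symm x) i : R))
    (fun a b => by
      show ((((sgEquiv gR h).symm) (a + b)) i : R) = _
      rw [AddEquiv.map_add, DirectSum.add_apply, AddSubgroup.coe_add])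

theorem sgProj_mem (gR : ℤ → AddSubgroup R) (h : DirectSum.IsInternal gR) (i : ℤ) (x : R) :
    sgProj gR h i x ∈ gR i :=
  ((sgEquiv gR h).symm x i).2

theorem sgProj_of_homog (gR : ℤ → AddSubgroup R) (h : DirectSum.IsInternal gR) (i m : ℤ)
    {y : R} (hy : y ∈ gR m) :
    sgProj gR h i y = if him : i = m then y else 0 := by
  classical
  set e := sgEquiv gR h with he
  have hsymm : e.symm y = DirectSum.of (fun k => gR k) m ⟨y, hy⟩ := by
    rw [AddEquiv.symm_apply_eq]
    exact (DirectSum.coeAddMonoidHom_of gR m ⟨y, hy⟩).symm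
  show ((e.symm y) i : R) = _
  rw [hsymm]
  by_cases him : i = m
  · subst him
    rw [DirectSum.of_eq_same]
    simp
  · rw [DirectSum.of_eq_of_ne _ _ _ him]
    simp [him]

open scoped Classical in
theorem sgProj_sum (gR : ℤ → AddSubgroup R) (h : DirectSum.IsInternal gR) (x : R) :
    x = ∑ i ∈ ((sgEquiv gR h).symm x).support,
        sgProj gR h i x := by
  classical
  set e := sgEquiv gR h with he
  conv_lhs => rw [← e.apply_symm_apply x]
  show DirectSum.coeAddMonoidHom gR (e.symm x) = _
  rw [DirectSum.coeAddMonoidHom_eq_dfinsuppSum]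
  rfl

theorem sgProj_mem_of_sg (gR : ℤ → AddSubgroup R) (h : DirectSum.IsInternal gR)
    {Q : Submodule R R} (hQ : IsSGSubmodule gR Q) {x : R} (hx : x ∈ Q) (i : ℤ) :
    sgProj gR h i x ∈ Q := by
  have hx' : x ∈ (⨆ n : ℤ, (gR n ⊓ Q.toAddSubgroup)) := by
    rw [← hQ]; exact hx
  refine AddSubgroup.iSup_induction (C := fun z => sgProj gR h i z ∈ Q) _ hx'
    (fun m y hy => ?_) (by show sgProj gR h i 0 ∈ Q; rw [map_zero]; exact Q.zero_mem)
    (fun a b ha hb => by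
      show sgProj gR h i (a + b) ∈ Q
      rw [map_add]
      exact Q.add_mem ha hb)
  show sgProj gR h i y ∈ Q
  rw [sgProj_of_homog gR h i m hy.1]
  split
  · exact hy.2
  · exact Q.zero_mem

theorem mem_iSup_components (gR : ℤ → AddSubgroup R) (h : DirectSum.IsInternal gR)
    {Q : Submodule R R} {x : R} (hx : ∀ i : ℤ, sgProj gR h i x ∈ Q) :
    x ∈ ⨆ n : ℤ, (gR n ⊓ Q.toAddSubgroup) := by
  classical
  rw [sgProj_sum gR h x]
  refine AddSubgroup.sum_mem _ fun i _ => ?_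
  exact AddSubgroup.mem_iSup_of_mem i ⟨sgProj_mem gR h i x, hx i⟩

theorem isSG_sInf (gR : ℤ → AddSubgroup R) (h : DirectSum.IsInternal gR)
    (T : Set (Submodule R R)) (hT : ∀ P ∈ T, IsSGSubmodule gR P) :
    IsSGSubmodule gR (sInf T) := by
  refine le_antisymm (fun x hx => ?_) (iSup_le fun n => inf_le_right)
  refine mem_iSup_components gR h fun i => ?_
  rw [Submodule.mem_sInf]
  exact fun P hP => sgProj_mem_of_sg gR h (hT P hP) (Submodule.mem_sInf.1 hx P hP) i

theorem isSG_geIdeal (gR : ℤ → AddSubgroup R) (h : DirectSum.IsInternal gR) (t : ℕ) :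
    IsSGSubmodule gR (geIdeal gR t) :=
  isSG_sInf gR h _ fun _ hP => hP.1

theorem isTwoSided_geIdeal (gR : ℤ → AddSubgroup R) (t : ℕ) :
    IsTwoSided (geIdeal gR t) := by
  intro x hx r
  simp only [geIdeal, Submodule.mem_sInf] at hx ⊢
  exact fun P hP => hP.2.1 x (hx P hP) r

theorem isTwoSided_idealPow {I : Ideal R} (hI : IsTwoSided I) (m : ℕ) :
    IsTwoSided (idealPow I m) := by
  induction m with
  | zero => intro x _ r; trivial
  | succ m ih =>
    intro x hx r
    refine Submodule.span_induction (p := fun z _ => z * r ∈ idealPow I (m + 1))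
      (fun z hz => ?_)
      (by show (0 : R) * r ∈ idealPow I (m + 1); rw [zero_mul]; exact Submodule.zero_mem _)
      (fun a b _ _ ha hb => ?_) (fun c a _ ha => ?_) hx
    · show z * r ∈ idealPow I (m + 1)
      obtain ⟨p, hp, q, hq, rfl⟩ := Set.mem_mul.1 hz
      rw [mul_assoc]
      exact Submodule.subset_span (Set.mul_mem_mul hp (ih q hq r))
    · show (a + b) * r ∈ idealPow I (m + 1)
      rw [add_mul]
      exact Submodule.add_mem _ ha hb
    · show (c • a) * r ∈ idealPow I (m + 1)
      rw [smul_eq_mul, mul_assoc]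
      exact Submodule.smul_mem _ c ha

theorem isTwoSided_map (π : R →+* S) (hπ : Function.Surjective π)
    {I : Ideal R} (hI : IsTwoSided I) : IsTwoSided (Ideal.map π I) := by
  intro x hx r
  obtain ⟨a, ha, rfl⟩ := Ideal.mem_map_iff_of_surjective π hπ |>.1 hx
  obtain ⟨b, rfl⟩ := hπ r
  rw [← map_mul]
  exact Ideal.mem_map_of_mem π (hI a ha b)

theorem isSG_map (gR : ℤ → AddSubgroup R) (gS : ℤ → AddSubgroup S)
    (h : DirectSum.IsInternal gR) (π : R →+* S) (hπ : Function.Surjective π)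
    (hgS : ∀ k : ℤ, gS k = (gR k).map π.toAddMonoidHom)
    {P : Submodule R R} (hP : IsSGSubmodule gR P) :
    IsSGSubmodule gS (Ideal.map π P) := by
  classical
  refine le_antisymm (fun x hx => ?_) (iSup_le fun n => inf_le_right)
  obtain ⟨p, hp, rfl⟩ := Ideal.mem_map_iff_of_surjective π hπ |>.1 hx
  rw [sgProj_sum gR h p, map_sum]
  refine AddSubgroup.sum_mem _ fun i _ => ?_
  refine AddSubgroup.mem_iSup_of_mem i ⟨?_, ?_⟩
  · rw [hgS i]
    exact AddSubgroup.mem_map_of_mem _ (sgProj_mem gR h i p)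
  · exact Ideal.mem_map_of_mem π (sgProj_mem_of_sg gR h hP hp i)

theorem geIdeal_le_map (gR : ℤ → AddSubgroup R) (gS : ℤ → AddSubgroup S)
    (h : DirectSum.IsInternal gR) (π : R →+* S) (hπ : Function.Surjective π)
    (hgS : ∀ k : ℤ, gS k = (gR k).map π.toAddMonoidHom) (t : ℕ) :
    geIdeal gS t ≤ Ideal.map π (geIdeal gR t) := by
  refine sInf_le ⟨isSG_map gR gS h π hπ hgS (isSG_geIdeal gR h t),
    isTwoSided_map π hπ (isTwoSided_geIdeal gR t), fun k hk x hx => ?_⟩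
  rw [hgS k] at hx
  obtain ⟨a, ha, rfl⟩ := hx
  refine Ideal.mem_map_of_mem π ?_
  simp only [geIdeal, Submodule.mem_sInf]
  exact fun P hP => hP.2.2 k hk ha

theorem idealPow_mono {A B : Ideal R} (hAB : A ≤ B) (m : ℕ) :
    idealPow A m ≤ idealPow B m := by
  induction m with
  | zero => exact le_rfl
  | succ m ih =>
    exact Submodule.span_mono (Set.mul_subset_mul hAB ih)

theorem idealPow_map_le (π : R →+* S) (hπ : Function.Surjective π) (A : Ideal R) (m : ℕ) :
    idealPow (Ideal.map π A) m ≤ Ideal.map π (idealPow A m) := by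
  induction m with
  | zero =>
    intro x _
    obtain ⟨a, rfl⟩ := hπ x
    exact Ideal.mem_map_of_mem π trivial
  | succ m ih =>
    refine Submodule.span_le.2 fun z hz => ?_
    obtain ⟨u, hu, v, hv, rfl⟩ := Set.mem_mul.1 hz
    obtain ⟨a, ha, rfl⟩ := Ideal.mem_map_iff_of_surjective π hπ |>.1 hu
    obtain ⟨b, hb, rfl⟩ := Ideal.mem_map_iff_of_surjective π hπ |>.1 (ih hv)
    rw [← map_mul]
    exact Ideal.mem_map_of_mem π
      (Submodule.subset_span (Set.mul_mem_mul ha hb))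

end Aux

/-- for `I = (R_{≥t})ⁿ` and the induced map `j : I/JI → R/J`,
the cokernel of `j` is torsion, and if `J` satisfies condition (*) then the kernel of `j`
is torsion.  `R/J` is modelled by a surjective ring homomorphism `π : R → S` with SG
kernel; torsion is stated elementwise: the cokernel condition says every `s ∈ S` is sent
into the image `π(I)` by some power `(S_{≥t'})^{n'}`, and the kernel condition says every
`x ∈ I ⊓ J` is sent into `J·I` by some power `(S_{≥t'})^{n'}` (acting through
representatives). -/
theorem stmt_14 {R S : Type*} [Ring R] [Ring S]
    (gR : ℤ → AddSubgroup R) (gS : ℤ → AddSubgroup S)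
    (hR : SG.IsSGRing gR) (hpos : ∀ k : ℤ, k < 0 → gR k = ⊥)
    (hnoe : IsNoetherian R R)
    (π : R →+* S) (hπ : Function.Surjective π)
    (hgS : ∀ k : ℤ, gS k = (gR k).map π.toAddMonoidHom)
    (hJsg : SG.IsSGSubmodule gR (RingHom.ker π))
    (hcomp : π '' SG.Rprime gR = SG.Rprime gS)
    (t n : ℕ) :
    (∀ s : S, ∃ t' n' : ℕ, ∀ y ∈ SG.idealPow (SG.geIdeal gS t') n',
        y * s ∈ Submodule.span S (π '' (SG.idealPow (SG.geIdeal gR t) n : Set R))) ∧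
    (SG.CondStar gR (RingHom.ker π) →
      ∀ x ∈ SG.idealPow (SG.geIdeal gR t) n ⊓ RingHom.ker π,
        ∃ t' n' : ℕ, ∀ r : R, π r ∈ SG.idealPow (SG.geIdeal gS t') n' →
          r * x ∈ Submodule.span R
            ((RingHom.ker π : Set R) * (SG.idealPow (SG.geIdeal gR t) n : Set R))) := by
  classical
  have hInt : DirectSum.IsInternal gR := hR.1
  have key : ∀ t' n' : ℕ, SG.idealPow (SG.geIdeal gS t') n' ≤
      Ideal.map π (SG.idealPow (SG.geIdeal gR t') n') := fun t' n' =>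
    le_trans (idealPow_mono (geIdeal_le_map gR gS hInt π hπ hgS t') n')
      (idealPow_map_le π hπ _ n')
  constructor
  · intro s
    refine ⟨t, n, fun y hy => ?_⟩
    have h1 : y ∈ Ideal.map π (SG.idealPow (SG.geIdeal gR t) n) := key t n hy
    have h2 : y * s ∈ Ideal.map π (SG.idealPow (SG.geIdeal gR t) n) :=
      isTwoSided_map π hπ (isTwoSided_idealPow (isTwoSided_geIdeal gR t) n) y h1 s
    exact h2
  · intro hstar x hx
    obtain ⟨nx, tx, hcs⟩ := hstar n t x ⟨hx.2, hx.1⟩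
    refine ⟨tx, nx, fun r hr => ?_⟩
    obtain ⟨a, ha, hπa⟩ := Ideal.mem_map_iff_of_surjective π hπ |>.1 (key tx nx hr)
    have hra : r - a ∈ RingHom.ker π := by
      rw [RingHom.mem_ker, map_sub, hπa, sub_self]
    have h1 : (r - a) * x ∈ Submodule.span R
        ((RingHom.ker π : Set R) * (SG.idealPow (SG.geIdeal gR t) n : Set R)) :=
      Submodule.subset_span (Set.mul_mem_mul hra hx.1)
    have h2 := hcs a ha
    have hrx : r * x = (r - a) * x + a * x := by rw [sub_mul, sub_add_cancel]
    rw [hrx]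
    exact Submodule.add_mem _ h1 h2
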